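/- If a cubic graph G admits a 2-packing of four joins {J1, J2, J3, J4} with J4 connected, then G admits a (1,2)-cover of its edge set by four joins, i.e., four joins such that every edge of G belongs to at least one and at most two of them. -/

import Mathlib

/-- The number of edges of `S` incident with `v`. -/
noncomputable def edgeDeg {V : Type*} (S : Set (Sym2 V)) (v : V) : ℕ :=
  {e ∈ S | v ∈ e}.ncard

/-- A join of a cubic graph `G`: a set of edges in which every vertex has degree 1 or 3. -/
def IsJoinOf {V : Type*} (G : SimpleGraph V) (J : Set (Sym2 V)) : Prop :=
  J ⊆ G.edgeSet ∧ ∀ v : V, edgeDeg J v = 1 ∨ edgeDeg J v = 3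

/-- `c` is a proper 3-edge-colouring of the edge set `J`. -/
def IsProperOn {V : Type*} (J : Set (Sym2 V)) (c : Sym2 V → Fin 3) : Prop :=
  ∀ e₁ ∈ J, ∀ e₂ ∈ J, e₁ ≠ e₂ → (∃ v : V, v ∈ e₁ ∧ v ∈ e₂) → c e₁ ≠ c e₂


section Helpers


variable {V : Type*} [Fintype V] [DecidableEq V]

lemma edgeDeg_mono {A B : Set (Sym2 V)} (h : A ⊆ B) (v : V) :
    edgeDeg A v ≤ edgeDeg B v :=
  Set.ncard_le_ncard (fun e he => ⟨h he.1, he.2⟩) (Set.toFinite _)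

lemma edgeDeg_union {A B : Set (Sym2 V)} (h : Disjoint A B) (v : V) :
    edgeDeg (A ∪ B) v = edgeDeg A v + edgeDeg B v := by
  unfold edgeDeg
  rw [show {e ∈ A ∪ B | v ∈ e} = {e ∈ A | v ∈ e} ∪ {e ∈ B | v ∈ e} by
    ext e; simp only [Set.mem_union, Set.mem_setOf_eq]; tauto]
  exact Set.ncard_union_eq (by
    rw [Set.disjoint_left] at h ⊢
    exact fun e he he' => h he.1 he'.1) (Set.toFinite _) (Set.toFinite _)

lemma edgeDeg_symmDiff (A B : Set (Sym2 V)) (v : V) :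
    edgeDeg (symmDiff A B) v + 2 * edgeDeg (A ∩ B) v = edgeDeg A v + edgeDeg B v := by
  unfold edgeDeg
  have h1 : {e ∈ symmDiff A B | v ∈ e} = ({e ∈ A | v ∈ e} \ {e ∈ B | v ∈ e}) ∪
      ({e ∈ B | v ∈ e} \ {e ∈ A | v ∈ e}) := by
    ext e; simp only [Set.mem_symmDiff, Set.mem_union, Set.mem_diff, Set.mem_setOf_eq]; tauto
  have h2 : {e ∈ A ∩ B | v ∈ e} = ({e ∈ A | v ∈ e} ∩ {e ∈ B | v ∈ e}) := by
    ext e; simp only [Set.mem_inter_iff, Set.mem_setOf_eq]; tauto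
  rw [h1, h2]
  set s := {e ∈ A | v ∈ e}
  set t := {e ∈ B | v ∈ e}
  have hd : Disjoint (s \ t) (t \ s) := disjoint_sdiff_sdiff
  rw [Set.ncard_union_eq hd (Set.toFinite _) (Set.toFinite _)]
  have hs : (s \ t).ncard + (s ∩ t).ncard = s.ncard := by
    rw [← Set.ncard_union_eq Set.disjoint_sdiff_inter (Set.toFinite _) (Set.toFinite _),
      Set.diff_union_inter]
  have ht : (t \ s).ncard + (t ∩ s).ncard = t.ncard := by
    rw [← Set.ncard_union_eq Set.disjoint_sdiff_inter (Set.toFinite _) (Set.toFinite _),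
      Set.diff_union_inter]
  rw [Set.inter_comm t s] at ht
  omega

lemma edgeDeg_eq_degree (H : SimpleGraph V) [DecidableRel H.Adj] (v : V) :
    edgeDeg H.edgeSet v = H.degree v := by
  rw [← SimpleGraph.card_incidenceFinset_eq_degree]
  unfold edgeDeg
  have : {e ∈ H.edgeSet | v ∈ e} = (H.incidenceFinset v : Set (Sym2 V)) := by
    ext e
    simp [SimpleGraph.mem_incidenceFinset, SimpleGraph.incidenceSet]
  rw [this, Set.ncard_coe_finset]

lemma natCard_fin4 (P : Fin 4 → Prop) [DecidablePred P] :
    Nat.card {i : Fin 4 // P i} = (if P 0 then 1 else 0) + (if P 1 then 1 else 0)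
      + (if P 2 then 1 else 0) + (if P 3 then 1 else 0) := by
  classical
  rw [Nat.card_eq_fintype_card, Fintype.card_subtype, Finset.card_filter,
    Fin.sum_univ_four]

end Helpers

section TJoin

variable {V : Type*} [Fintype V] [DecidableEq V]

open SimpleGraph

lemma edgeDeg_trail {H : SimpleGraph V} {u w : V} {p : H.Walk u w} (hp : p.IsTrail) (x : V) :
    edgeDeg {e | e ∈ p.edges} x = p.edges.countP (fun e => x ∈ e) := by
  classical
  unfold edgeDeg
  have h1 : {e ∈ {e | e ∈ p.edges} | x ∈ e}
      = ((p.edges.filter (fun e => x ∈ e)).toFinset : Set (Sym2 V)) := by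
    ext e
    simp [List.mem_filter]
  rw [h1, Set.ncard_coe_finset,
    List.toFinset_card_of_nodup (hp.edges_nodup.filter _),
    List.countP_eq_length_filter]

lemma exists_tjoin (H : SimpleGraph V) (hH : H.Connected) (T : Finset V)
    (hT : Even T.card) :
    ∃ S : Set (Sym2 V), S ⊆ H.edgeSet ∧ ∀ v, (Odd (edgeDeg S v) ↔ v ∈ T) := by
  classical
  induction T using Finset.strongInduction with
  | _ T ih =>
    rcases T.eq_empty_or_nonempty with rfl | ⟨u, hu⟩
    · refine ⟨∅, by simp, fun v => ?_⟩
      simp [edgeDeg]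
    · have hc1 : 1 ≤ T.card := Finset.card_pos.mpr ⟨u, hu⟩
      have hc2 : 2 ≤ T.card := by
        rw [Nat.even_iff] at hT; omega
      obtain ⟨w, hw⟩ : (T.erase u).Nonempty := by
        rw [← Finset.card_pos, Finset.card_erase_of_mem hu]; omega
      have hwu : w ≠ u := (Finset.mem_erase.mp hw).1
      have hwT : w ∈ T := (Finset.mem_erase.mp hw).2
      obtain ⟨p0⟩ := hH.preconnected u w
      have hq' : (p0.toPath : H.Walk u w).IsTrail := p0.toPath.2.isTrail
      set q : H.Walk u w := (p0.toPath : H.Walk u w) with hqdef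
      set T' := (T.erase u).erase w with hT'def
      have huT' : u ∉ T' := by simp [hT'def]
      have hwT' : w ∉ T' := by simp [hT'def]
      have hT'sub : T' ⊂ T := by
        refine Finset.ssubset_iff_of_subset ?_ |>.mpr ⟨u, hu, huT'⟩
        intro x hx
        exact Finset.mem_of_mem_erase (Finset.mem_of_mem_erase hx)
      have hT'card : Even T'.card := by
        have h1 : T'.card = T.card - 2 := by
          rw [hT'def, Finset.card_erase_of_mem hw, Finset.card_erase_of_mem hu]
          omega
        rw [Nat.even_iff] at hT ⊢; omega
      obtain ⟨S', hS'sub, hS'⟩ := ih T' hT'sub hT'card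
      refine ⟨symmDiff S' {e | e ∈ q.edges}, ?_, ?_⟩
      · intro e he
        rcases Set.mem_symmDiff.mp he with ⟨h1, _⟩ | ⟨h1, _⟩
        · exact hS'sub h1
        · exact q.edges_subset_edgeSet h1
      · intro v
        have h2 := edgeDeg_symmDiff S' {e | e ∈ q.edges} v
        have h3 : Odd (edgeDeg {e | e ∈ q.edges} v) ↔ (v = u ∨ v = w) := by
          rw [edgeDeg_trail hq', ← Nat.not_even_iff_odd, hq'.even_countP_edges_iff v]
          constructor
          · intro h
            by_contra hvv
            push_neg at hvv
            exact h (fun _ => ⟨hvv.1, hvv.2⟩)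
          · rintro (rfl | rfl) h
            · exact absurd rfl (h hwu.symm).1
            · exact absurd rfl (h hwu.symm).2
        have h4 := hS' v
        have hvT : (v ∈ T) ↔ (v ∈ T' ∨ v = u ∨ v = w) := by
          constructor
          · intro hv
            by_cases h5 : v = u
            · exact Or.inr (Or.inl h5)
            by_cases h6 : v = w
            · exact Or.inr (Or.inr h6)
            exact Or.inl (by simp [hT'def, h5, h6, hv])
          · rintro (hv | rfl | rfl)
            · exact Finset.mem_of_mem_erase (Finset.mem_of_mem_erase hv)
            · exact hu
            · exact hwT
        rw [Nat.odd_iff] at h3 h4 ⊢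
        rw [hvT]
        by_cases h5 : v = u
        · subst h5
          simp only [huT', eq_self_iff_true, true_or, or_true, iff_true, iff_false] at h3 h4 ⊢
          omega
        · by_cases h6 : v = w
          · subst h6
            simp only [hwT', eq_self_iff_true, or_true, iff_true, iff_false] at h3 h4 ⊢
            omega
          · simp only [h5, h6, or_false, false_or, iff_false] at h3 ⊢
            by_cases h7 : v ∈ T' <;> simp only [h7, iff_true, iff_false] at h4 ⊢ <;> omega

end TJoin

/-- If a cubic graph `G` admits a 2-packing of four joins with the fourth
one connected, then `G` admits a (1,2)-cover of its edge set by four joins: every edge lies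
in at least one and at most two of them. -/
theorem packing_gives_cover {V : Type*} [Fintype V] [DecidableEq V]
    (G : SimpleGraph V) [DecidableRel G.Adj]
    (hcubic : ∀ v : V, G.degree v = 3)
    (J : Fin 4 → Set (Sym2 V))
    (hjoins : ∀ i, IsJoinOf G (J i))
    (hpack : ∀ e : Sym2 V, Nat.card {i : Fin 4 // e ∈ J i} ≤ 2)
    (hconn : (SimpleGraph.fromEdgeSet (J 3)).Connected) :
    ∃ K : Fin 4 → Set (Sym2 V),
      (∀ i, IsJoinOf G (K i)) ∧
      (∀ e ∈ G.edgeSet, 1 ≤ Nat.card {i : Fin 4 // e ∈ K i} ∧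
        Nat.card {i : Fin 4 // e ∈ K i} ≤ 2) := by
  classical
  set X : Set (Sym2 V) := {e | e ∈ G.edgeSet ∧ e ∉ J 3 ∧
    ((e ∉ J 0 ∧ e ∉ J 1 ∧ e ∉ J 2) ∨ (e ∈ J 0 ∧ e ∈ J 1 ∧ e ∉ J 2) ∨
     (e ∈ J 0 ∧ e ∉ J 1 ∧ e ∈ J 2))} with hXdef
  have hXE : X ⊆ G.edgeSet := fun e he => he.1
  have hXedge : (SimpleGraph.fromEdgeSet X).edgeSet = X := by
    rw [SimpleGraph.edgeSet_fromEdgeSet]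
    ext e
    simp only [Set.mem_diff, Set.mem_setOf_eq]
    exact ⟨fun h => h.1, fun h => ⟨h, G.not_isDiag_of_mem_edgeSet (hXE h)⟩⟩
  haveI : DecidableRel (SimpleGraph.fromEdgeSet X).Adj := Classical.decRel _
  have hdegX : ∀ v, (SimpleGraph.fromEdgeSet X).degree v = edgeDeg X v := by
    intro v
    have h := edgeDeg_eq_degree (SimpleGraph.fromEdgeSet X) v
    rw [hXedge] at h
    exact h.symm
  set T : Finset V := Finset.univ.filter (fun v => Odd (edgeDeg X v)) with hTdef
  have hTeven : Even T.card := by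
    have h := SimpleGraph.even_card_odd_degree_vertices (G := SimpleGraph.fromEdgeSet X)
    have h2 : Finset.univ.filter (fun v => Odd ((SimpleGraph.fromEdgeSet X).degree v)) = T := by
      ext v
      simp [hTdef, hdegX v]
    rwa [h2] at h
  obtain ⟨S, hSsub, hSpar⟩ := exists_tjoin _ hconn T hTeven
  have hSJ3 : S ⊆ J 3 := by
    intro e he
    have h := hSsub he
    rw [SimpleGraph.edgeSet_fromEdgeSet] at h
    exact h.1
  have hXS : Disjoint X S := by
    rw [Set.disjoint_left]
    intro e heX heS
    exact heX.2.1 (hSJ3 heS)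
  have hSparX : ∀ v, (Odd (edgeDeg S v) ↔ Odd (edgeDeg X v)) := by
    intro v
    rw [hSpar v, hTdef]
    simp
  set Z : Set (Sym2 V) := X ∪ S with hZdef
  set K : Fin 4 → Set (Sym2 V) := fun i =>
    if i = 0 then symmDiff (J 0) Z
    else if i = 1 then J 1
    else if i = 2 then J 2
    else symmDiff (J 1) (symmDiff (J 2) (J 3)) with hKdef
  have hK0 : K 0 = symmDiff (J 0) Z := by simp [hKdef]
  have hK1 : K 1 = J 1 := by simp only [hKdef]; rfl
  have hK2 : K 2 = J 2 := by simp only [hKdef]; rfl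
  have hK3 : K 3 = symmDiff (J 1) (symmDiff (J 2) (J 3)) := by simp only [hKdef]; rfl
  have hZE : Z ⊆ G.edgeSet := by
    rw [hZdef]
    exact Set.union_subset hXE (fun e he => (hjoins 3).1 (hSJ3 he))
  have hKE : ∀ i, K i ⊆ G.edgeSet := by
    intro i
    fin_cases i <;>
      [rw [show (⟨0, by omega⟩ : Fin 4) = 0 from rfl];
       rw [show (⟨1, by omega⟩ : Fin 4) = 1 from rfl];
       rw [show (⟨2, by omega⟩ : Fin 4) = 2 from rfl];
       rw [show (⟨3, by omega⟩ : Fin 4) = 3 from rfl]]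
    · rw [hK0]
      exact fun e he => (Set.union_subset (hjoins 0).1 hZE) ((symmDiff_le_sup : symmDiff (J 0) Z ≤ _) he)
    · rw [hK1]; exact (hjoins 1).1
    · rw [hK2]; exact (hjoins 2).1
    · rw [hK3]
      refine fun e he => ?_
      have h := (symmDiff_le_sup : symmDiff (J 1) (symmDiff (J 2) (J 3)) ≤ _) he
      rcases h with h | h
      · exact (hjoins 1).1 h
      · rcases (symmDiff_le_sup : symmDiff (J 2) (J 3) ≤ _) h with h | h
        · exact (hjoins 2).1 h
        · exact (hjoins 3).1 h
  have hodd : ∀ i v, Odd (edgeDeg (J i) v) := by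
    intro i v
    rcases (hjoins i).2 v with h | h <;> rw [h]
    · exact ⟨0, by omega⟩
    · exact ⟨1, by omega⟩
  have hdeg3 : ∀ (A : Set (Sym2 V)), A ⊆ G.edgeSet → ∀ v, edgeDeg A v ≤ 3 := by
    intro A hA v
    have h1 := edgeDeg_mono hA v
    rwa [edgeDeg_eq_degree G v, hcubic v] at h1
  have hZpar : ∀ v, Even (edgeDeg Z v) := by
    intro v
    rw [hZdef, edgeDeg_union hXS v]
    have h := hSparX v
    rw [Nat.odd_iff, Nat.odd_iff] at h
    rw [Nat.even_iff]
    omega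
  refine ⟨K, ?_, ?_⟩
  · intro i
    fin_cases i
    · refine ⟨hKE 0, fun v => ?_⟩
      have h2 := edgeDeg_symmDiff (J 0) Z v
      have h3 := hodd 0 v
      have h4 := hZpar v
      have h5 := hdeg3 _ (hKE 0) v
      rw [hK0] at h5
      rw [show (⟨0, by omega⟩ : Fin 4) = 0 from rfl, hK0]
      rw [Nat.odd_iff] at h3
      rw [Nat.even_iff] at h4
      omega
    · exact hK1 ▸ hjoins 1
    · exact hK2 ▸ hjoins 2
    · refine ⟨hKE 3, fun v => ?_⟩
      have h2 := edgeDeg_symmDiff (J 1) (symmDiff (J 2) (J 3)) v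
      have h2' := edgeDeg_symmDiff (J 2) (J 3) v
      have h3 := hodd 1 v
      have h3' := hodd 2 v
      have h3'' := hodd 3 v
      have h5 := hdeg3 _ (hKE 3) v
      rw [hK3] at h5
      rw [show (⟨3, by omega⟩ : Fin 4) = 3 from rfl, hK3]
      rw [Nat.odd_iff] at h3 h3' h3''
      omega
  · intro e he
    have hp := hpack e
    rw [natCard_fin4] at hp
    rw [natCard_fin4]
    have hXe : e ∈ X ↔ (e ∉ J 3 ∧
        ((e ∉ J 0 ∧ e ∉ J 1 ∧ e ∉ J 2) ∨ (e ∈ J 0 ∧ e ∈ J 1 ∧ e ∉ J 2) ∨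
         (e ∈ J 0 ∧ e ∉ J 1 ∧ e ∈ J 2))) := by
      rw [hXdef]
      simp only [Set.mem_setOf_eq, he, true_and]
    have hzm : e ∈ Z ↔ (e ∈ X ∨ e ∈ S) := by rw [hZdef]; exact Set.mem_union e X S
    have hm0 : e ∈ K 0 ↔ ((e ∈ J 0 ∧ ¬ e ∈ Z) ∨ (e ∈ Z ∧ ¬ e ∈ J 0)) := by
      rw [hK0]; exact Set.mem_symmDiff
    have hm3 : e ∈ K 3 ↔ ((e ∈ J 1 ∧ ¬ ((e ∈ J 2 ∧ ¬ e ∈ J 3) ∨ (e ∈ J 3 ∧ ¬ e ∈ J 2))) ∨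
        (((e ∈ J 2 ∧ ¬ e ∈ J 3) ∨ (e ∈ J 3 ∧ ¬ e ∈ J 2)) ∧ ¬ e ∈ J 1)) := by
      rw [hK3]
      simp only [Set.mem_symmDiff]
    rw [hzm] at hm0
    by_cases h0 : e ∈ J 0 <;> by_cases h1 : e ∈ J 1 <;> by_cases h2 : e ∈ J 2 <;>
        by_cases h3 : e ∈ J 3
    all_goals (try (exfalso; simp only [h0, h1, h2, h3, if_true, if_false] at hp; omega))
    all_goals (
      first
        | (have hs : e ∉ S := fun hs => h3 (hSJ3 hs))
        | by_cases hs : e ∈ S)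
    all_goals (
      simp only [h0, h1, h2, h3, hs, not_true, not_false_iff, true_and, and_true, false_and,
        and_false, true_or, or_true, false_or, or_false, iff_true, iff_false, not_or] at hXe hm0 hm3 ⊢)
    all_goals (
      simp only [hXe, hm0, hm3, hK1, hK2, h1, h2, not_true, not_false_iff, true_and, and_true,
        false_and, and_false, true_or, or_true, false_or, or_false, if_true, if_false,
        iff_true, iff_false])
    all_goals norm_num
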